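/- arXiv:1711.06670 — 3 statements merged into one kernel-verified Lean document; each statement's English description precedes it below -/
import Mathlib

section
/- Let Q be a finite quiver with adjacency matrix A(Q), whose (i,j)-entry is the number of arrows from vertex v_i to vertex v_j, and let fpdim(Q) denote the spectral radius ρ(A(Q)). An oriented cycle based at a vertex v_i is called indecomposable if it is not a concatenation of two oriented cycles based at v_i; let θ_i be the number of indecomposable oriented cycles based at v_i, and let the cycle number be Θ(Q) = max_i θ_i. Then: (1) fpdim(Q) = 0 if and only if Θ(Q) = 0 (i.e., Q has no oriented cycles); (2) fpdim(Q) = 1 if and only if Θ(Q) = 1; (3) fpdim(Q) > 1 if and only if Θ(Q) ≥ 2. -/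
open scoped Classical
set_option linter.unusedSectionVars false
set_option maxHeartbeats 1000000

noncomputable section

/-- The spectral radius of a complex square matrix: the supremum of the moduli of its
eigenvalues (elements of its spectrum). -/
def specRad {ι : Type*} [Fintype ι] [DecidableEq ι] (M : Matrix ι ι ℂ) : ℝ :=
  sSup ((fun z : ℂ => ‖z‖) '' spectrum ℂ M)

variable (V : Type) [Quiver.{1} V] [Fintype V] [DecidableEq V] [∀ a b : V, Fintype (a ⟶ b)]

/-- The adjacency matrix of a finite quiver: the `(i,j)` entry is the number of arrows
from the vertex `i` to the vertex `j`. -/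
def quivAdj : Matrix V V ℂ := fun a b => (Fintype.card (a ⟶ b) : ℂ)

/-- The Frobenius-Perron dimension of a finite quiver: the spectral radius of its
adjacency matrix. -/
def fpdimQuiver : ℝ := specRad (quivAdj V)

/-- An indecomposable oriented cycle based at the vertex `a`: an oriented cycle
(a path of positive length from `a` to `a`) that is not the concatenation of two
oriented cycles based at `a`. -/
def IsIndecCycle {a : V} (p : Quiver.Path a a) : Prop :=
  0 < p.length ∧
    ¬ ∃ (q r : Quiver.Path a a), 0 < q.length ∧ 0 < r.length ∧ p = q.comp r

/-- The number of indecomposable oriented cycles based at the vertex `a`. -/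
def theta (a : V) : ℕ∞ := {p : Quiver.Path a a | IsIndecCycle V p}.encard

/-- The cycle number of a quiver: `Θ(Q) = max_a θ_a`. -/
def cycleNumber : ℕ∞ := ⨆ a : V, theta V a


variable {V}

namespace QPath
variable {V : Type} [Quiver.{1} V]

/-- heterogeneous cancellation of compositions with equal-length suffixes -/
lemma comp_cancel {s : V} : ∀ {t b b' : V} (z : Quiver.Path b t) (z' : Quiver.Path b' t)
    (y : Quiver.Path s b) (y' : Quiver.Path s b'), y.comp z = y'.comp z' → z.length = z'.length →
    b = b' ∧ HEq y y' ∧ HEq z z'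
  | _, _, b', Quiver.Path.nil, z', y, y', h, hl => by
    obtain rfl := (Quiver.Path.eq_of_length_zero z' hl.symm)
    obtain rfl := Quiver.Path.eq_nil_of_length_zero z' hl.symm
    exact ⟨rfl, heq_of_eq (by simpa using h), HEq.rfl⟩
  | _, _, _, Quiver.Path.cons zp e, Quiver.Path.nil, y, y', h, hl => by simp at hl
  | _, _, _, Quiver.Path.cons zp e, Quiver.Path.cons z'p e', y, y', h, hl => by
    obtain rfl := (Quiver.Path.obj_eq_of_cons_eq_cons h).symm
    have h2 : y.comp zp = y'.comp z'p := eq_of_heq (Quiver.Path.heq_of_cons_eq_cons h)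
    have he : e = e' := eq_of_heq (Quiver.Path.hom_heq_of_cons_eq_cons h)
    obtain ⟨rfl, hy, hz⟩ := comp_cancel zp z'p y y' h2 (by simpa using hl)
    exact ⟨rfl, hy, by rw [eq_of_heq hz, he]⟩

/-- decompose a path into a prefix and a suffix of given length -/
lemma exists_suffix {s : V} : ∀ {t : V} (p : Quiver.Path s t) (n : ℕ), n ≤ p.length →
    ∃ (m : V) (y : Quiver.Path s m) (z : Quiver.Path m t), p = y.comp z ∧ z.length = n
  | _, p, 0, _ => ⟨_, p, Quiver.Path.nil, rfl, rfl⟩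
  | _, Quiver.Path.nil, n+1, h => by simp at h
  | _, Quiver.Path.cons q e, n+1, h => by
    obtain ⟨m, y, z, hp, hz⟩ := exists_suffix q n (by simpa using h)
    exact ⟨m, y, z.cons e, by rw [hp]; rfl, by simp [hz]⟩

end QPath


lemma exists_indec_suffix {i : V} : ∀ (n : ℕ) (p : Quiver.Path i i), p.length ≤ n → 0 < p.length →
    ∃ y z : Quiver.Path i i, IsIndecCycle V z ∧ p = y.comp z := by
  intro n
  induction n with
  | zero => intro p h h0; omega
  | succ n ih =>
    intro p h h0
    by_cases hI : IsIndecCycle V p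
    · exact ⟨.nil, p, hI, (Quiver.Path.nil_comp p).symm⟩
    · have hd : ∃ q r : Quiver.Path i i, 0 < q.length ∧ 0 < r.length ∧ p = q.comp r := by
        by_contra hc; exact hI ⟨h0, hc⟩
      obtain ⟨q, r, hq, hr, rfl⟩ := hd
      obtain ⟨y, z, hz, rfl⟩ := ih r (by simp only [Quiver.Path.length_comp] at h; omega) hr
      exact ⟨q.comp y, z, hz, (Quiver.Path.comp_assoc _ _ _).symm⟩

lemma cycle_count_le_one {i : V}
    (h1 : ∀ z z' : Quiver.Path i i, IsIndecCycle V z → IsIndecCycle V z' → z = z') :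
    ∀ (n : ℕ) (p q : Quiver.Path i i), p.length ≤ n → p.length = q.length → p = q := by
  intro n
  induction n with
  | zero =>
    intro p q hp hpq
    rw [Quiver.Path.eq_nil_of_length_zero p (by omega),
      Quiver.Path.eq_nil_of_length_zero q (by omega)]
  | succ n ih =>
    intro p q hp hpq
    rcases Nat.eq_zero_or_pos p.length with h0 | h0
    · rw [Quiver.Path.eq_nil_of_length_zero p h0, Quiver.Path.eq_nil_of_length_zero q (by omega)]
    · obtain ⟨y, z, hz, hpe⟩ := exists_indec_suffix p.length p le_rfl h0
      obtain ⟨y', z', hz', hqe⟩ := exists_indec_suffix q.length q le_rfl (by omega)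
      obtain rfl := h1 z z' hz hz'
      rw [hpe, hqe] at hpq ⊢
      have hyl : y.length = y'.length := by
        simp only [Quiver.Path.length_comp] at hpq; omega
      have hy := ih y y' (by
        have := hz.1
        rw [hpe] at hp
        simp only [Quiver.Path.length_comp] at hp; omega) hyl
      rw [hy]

lemma comp_ne {i : V} (c c' : Quiver.Path i i) (hc' : IsIndecCycle V c')
    (h : c.length < c'.length) (hcpos : 0 < c.length) : c.comp c' ≠ c'.comp c := by
  intro he
  obtain ⟨m, s, t, hce, ht⟩ := QPath.exists_suffix c' c.length (le_of_lt h)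
  rw [hce] at he
  have he' : (c.comp s).comp t = (s.comp t).comp c := by
    rw [Quiver.Path.comp_assoc]; exact he
  obtain ⟨hm, hy, hz⟩ := QPath.comp_cancel t c (c.comp s) (s.comp t) he' (by rw [ht])
  subst hm
  have htc : t = c := eq_of_heq hz
  refine hc'.2 ⟨s, t, ?_, by rw [ht]; exact hcpos, hce⟩
  have := congrArg Quiver.Path.length hce
  simp only [Quiver.Path.length_comp] at this
  omega

lemma two_cycles {i : V} (c c' : Quiver.Path i i) (hc : IsIndecCycle V c)
    (hc' : IsIndecCycle V c') (hne : c ≠ c') :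
    ∃ (L : ℕ) (d1 d2 : Quiver.Path i i), 0 < L ∧ d1.length = L ∧ d2.length = L ∧ d1 ≠ d2 := by
  rcases lt_trichotomy c.length c'.length with h | h | h
  · exact ⟨c.length + c'.length, c.comp c', c'.comp c, by have := hc.1; omega,
      by simp [Quiver.Path.length_comp], by simp [Quiver.Path.length_comp]; omega,
      comp_ne c c' hc' h hc.1⟩
  · exact ⟨c.length, c, c', hc.1, rfl, h.symm, hne⟩
  · exact ⟨c.length + c'.length, c'.comp c, c.comp c', by have := hc.1; omega,
      by simp [Quiver.Path.length_comp]; omega, by simp [Quiver.Path.length_comp],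
      comp_ne c' c hc h hc'.1⟩

def pathsOf {i : V} (d1 d2 : Quiver.Path i i) : ∀ (k : ℕ), (Fin k → Bool) → Quiver.Path i i
  | 0, _ => .nil
  | k+1, f => (pathsOf d1 d2 k (f ∘ Fin.succ)).comp (if f 0 then d1 else d2)

lemma pathsOf_length {i : V} (d1 d2 : Quiver.Path i i) {L : ℕ} (h1 : d1.length = L)
    (h2 : d2.length = L) : ∀ k f, (pathsOf d1 d2 k f).length = k * L
  | 0, f => by simp [pathsOf]
  | k+1, f => by
    by_cases hf : f 0 <;>
      simp [pathsOf, Quiver.Path.length_comp, pathsOf_length d1 d2 h1 h2 k _, hf, h1, h2] <;>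
      ring

lemma pathsOf_inj {i : V} (d1 d2 : Quiver.Path i i) {L : ℕ} (h1 : d1.length = L)
    (h2 : d2.length = L) (hne : d1 ≠ d2) : ∀ k, Function.Injective (pathsOf d1 d2 k) := by
  intro k
  induction k with
  | zero => intro f g _; funext x; exact absurd x.2 (by omega)
  | succ k ih =>
    intro f g h
    simp only [pathsOf] at h
    have hlen : (if f 0 then d1 else d2).length = (if g 0 then d1 else d2).length := by
      by_cases hf : f 0 <;> by_cases hg : g 0 <;> simp [hf, hg, h1, h2]
    obtain ⟨hpre, hsuf⟩ := (Quiver.Path.comp_inj hlen).mp h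
    have h0 : f 0 = g 0 := by
      by_cases hf : f 0 <;> by_cases hg : g 0 <;> simp_all
    have htail : f ∘ Fin.succ = g ∘ Fin.succ := ih hpre
    funext x
    refine Fin.cases ?_ ?_ x
    · exact h0
    · intro j; exact congrFun htail j


lemma path_succ_bij {a b : V} {n : ℕ} :
    Function.Bijective (fun y : (Σ c : V, {q : Quiver.Path a c // q.length = n} × (c ⟶ b)) =>
      (⟨y.2.1.1.cons y.2.2, by simp [y.2.1.2]⟩ : {p : Quiver.Path a b // p.length = n+1})) := by
  constructor
  · rintro ⟨c, ⟨q, hq⟩, e⟩ ⟨c', ⟨q', hq'⟩, e'⟩ h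
    simp only [Subtype.mk.injEq] at h
    obtain rfl := Quiver.Path.obj_eq_of_cons_eq_cons h
    obtain rfl : q = q' := eq_of_heq (Quiver.Path.heq_of_cons_eq_cons h)
    obtain rfl : e = e' := eq_of_heq (Quiver.Path.hom_heq_of_cons_eq_cons h)
    rfl
  · rintro ⟨p, hp⟩
    cases p with
    | nil => simp at hp
    | cons q e =>
      exact ⟨⟨_, ⟨q, by simpa using hp⟩, e⟩, rfl⟩

def pathFintype : ∀ (n : ℕ) (a b : V), Fintype {p : Quiver.Path a b // p.length = n}
  | 0, a, b => by
    have : Subsingleton {p : Quiver.Path a b // p.length = 0} := ⟨by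
      rintro ⟨p, hp⟩ ⟨q, hq⟩
      obtain rfl := Quiver.Path.eq_of_length_zero p hp
      simp [Quiver.Path.eq_nil_of_length_zero p hp, Quiver.Path.eq_nil_of_length_zero q hq]⟩
    exact Fintype.ofFinite _
  | n+1, a, b => by
    letI : ∀ c, Fintype {q : Quiver.Path a c // q.length = n} := fun c => pathFintype n a c
    exact Fintype.ofBijective _ (path_succ_bij (n := n) (a := a) (b := b))

instance instPathFintype (n : ℕ) (a b : V) : Fintype {p : Quiver.Path a b // p.length = n} :=
  pathFintype n a b

def nPaths (n : ℕ) (a b : V) : ℕ := Fintype.card {p : Quiver.Path a b // p.length = n}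

lemma nPaths_zero (a b : V) : nPaths 0 a b = if a = b then 1 else 0 := by
  rw [nPaths]
  split
  · rename_i h
    subst h
    rw [Fintype.card_eq_one_iff]
    refine ⟨⟨Quiver.Path.nil, rfl⟩, ?_⟩
    rintro ⟨p, hp⟩
    simp [Quiver.Path.eq_nil_of_length_zero p hp]
  · rename_i h
    rw [Fintype.card_eq_zero_iff]
    exact ⟨fun x => h (Quiver.Path.eq_of_length_zero x.1 x.2)⟩

lemma nPaths_succ (n : ℕ) (a b : V) :
    nPaths (n+1) a b = ∑ c : V, nPaths n a c * Fintype.card (c ⟶ b) := by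
  rw [nPaths, ← Fintype.card_of_bijective (path_succ_bij (a := a) (b := b) (n := n))]
  rw [Fintype.card_sigma]
  congr 1
  ext c
  rw [Fintype.card_prod]
  rfl

lemma quivAdj_pow (n : ℕ) (a : V) : ∀ b : V, (quivAdj V ^ n) a b = (nPaths n a b : ℂ) := by
  induction n with
  | zero =>
    intro b
    rw [pow_zero, Matrix.one_apply, nPaths_zero]
    split <;> simp
  | succ n ih =>
    intro b
    rw [pow_succ, Matrix.mul_apply, nPaths_succ]
    push_cast
    refine Finset.sum_congr rfl fun c _ => ?_
    rw [ih c]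
    rfl

lemma trace_quivAdj_pow (n : ℕ) :
    (quivAdj V ^ n).trace = ((∑ i : V, nPaths n i i : ℕ) : ℂ) := by
  rw [Matrix.trace]
  push_cast
  exact Finset.sum_congr rfl fun i _ => quivAdj_pow n i i

/-- powers of a cycle -/
def cpow {i : V} (c : Quiver.Path i i) : ℕ → Quiver.Path i i
  | 0 => .nil
  | k+1 => (cpow c k).comp c

lemma cpow_length {i : V} (c : Quiver.Path i i) : ∀ k, (cpow c k).length = k * c.length
  | 0 => by simp [cpow]
  | k+1 => by
    simp [cpow, Quiver.Path.length_comp, cpow_length c k]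
    ring

lemma one_le_nPaths {i : V} (c : Quiver.Path i i) (k : ℕ) :
    1 ≤ nPaths (k * c.length) i i := by
  have : Nonempty {p : Quiver.Path i i // p.length = k * c.length} :=
    ⟨⟨cpow c k, cpow_length c k⟩⟩
  rw [nPaths]
  exact Fintype.card_pos

lemma nPaths_le_one {i : V}
    (h1 : ∀ z z' : Quiver.Path i i, IsIndecCycle V z → IsIndecCycle V z' → z = z') (n : ℕ) :
    nPaths n i i ≤ 1 := by
  rw [nPaths, Fintype.card_le_one_iff]
  rintro ⟨p, hp⟩ ⟨q, hq⟩
  have := cycle_count_le_one h1 n p q (le_of_eq hp) (by rw [hp, hq])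
  simp [this]

lemma two_pow_le_nPaths {i : V} (d1 d2 : Quiver.Path i i) {L : ℕ} (h1 : d1.length = L)
    (h2 : d2.length = L) (hne : d1 ≠ d2) (k : ℕ) : 2 ^ k ≤ nPaths (k * L) i i := by
  have hinj : Function.Injective
      (fun f : Fin k → Bool => (⟨pathsOf d1 d2 k f, pathsOf_length d1 d2 h1 h2 k f⟩ :
        {p : Quiver.Path i i // p.length = k * L})) := by
    intro f g h
    exact pathsOf_inj d1 d2 h1 h2 hne k (by simpa [Subtype.ext_iff] using h)
  have := Fintype.card_le_of_injective _ hinj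
  simpa [nPaths] using this



section Pattern
variable {m : ℕ}

def ColZero (X : Matrix (Fin (m+1)) (Fin (m+1)) ℂ) : Prop := ∀ j : Fin m, X j.succ 0 = 0

lemma colZero_mul {X Y : Matrix (Fin (m+1)) (Fin (m+1)) ℂ} (hX : ColZero X) (hY : ColZero Y) :
    ColZero (X * Y) ∧ (X * Y) 0 0 = X 0 0 * Y 0 0 ∧
      (X * Y).submatrix Fin.succ Fin.succ
        = X.submatrix Fin.succ Fin.succ * Y.submatrix Fin.succ Fin.succ := by
  refine ⟨fun j => ?_, ?_, ?_⟩
  · rw [Matrix.mul_apply, Fin.sum_univ_succ, hX j, zero_mul, zero_add]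
    exact Finset.sum_eq_zero fun k _ => by rw [hY k, mul_zero]
  · rw [Matrix.mul_apply, Fin.sum_univ_succ]
    rw [Finset.sum_eq_zero fun k _ => by rw [hY k, mul_zero], add_zero]
  · ext i j
    rw [Matrix.mul_apply, Matrix.submatrix_apply, Matrix.mul_apply, Fin.sum_univ_succ,
      hX i, zero_mul, zero_add]
    rfl

lemma colZero_one : ColZero (1 : Matrix (Fin (m+1)) (Fin (m+1)) ℂ) :=
  fun j => Matrix.one_apply_ne (Fin.succ_ne_zero j)

lemma submatrix_one_succ :
    (1 : Matrix (Fin (m+1)) (Fin (m+1)) ℂ).submatrix Fin.succ Fin.succ = 1 := by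
  ext i j
  simp [Matrix.submatrix_apply, Matrix.one_apply, Fin.succ_inj]

lemma colZero_pow {X : Matrix (Fin (m+1)) (Fin (m+1)) ℂ} (hX : ColZero X) (n : ℕ) :
    ColZero (X^n) ∧ (X^n) 0 0 = (X 0 0)^n ∧
      (X^n).submatrix Fin.succ Fin.succ = (X.submatrix Fin.succ Fin.succ)^n := by
  induction n with
  | zero =>
    refine ⟨?_, ?_, ?_⟩ <;> rw [pow_zero]
    · exact colZero_one
    · rw [pow_zero]; exact Matrix.one_apply_eq 0
    · rw [pow_zero]; exact submatrix_one_succ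
  | succ n ih =>
    obtain ⟨h1, h2, h3⟩ := ih
    obtain ⟨g1, g2, g3⟩ := colZero_mul h1 hX
    rw [pow_succ, pow_succ, pow_succ]
    exact ⟨g1, by rw [g2, h2], by rw [g3, h3]⟩

lemma trace_fin_succ (X : Matrix (Fin (m+1)) (Fin (m+1)) ℂ) :
    X.trace = X 0 0 + (X.submatrix Fin.succ Fin.succ).trace := by
  rw [Matrix.trace, Matrix.trace, Fin.sum_univ_succ]
  rfl

lemma colZero_det {X : Matrix (Fin (m+1)) (Fin (m+1)) ℂ} (hX : ColZero X) :
    X.det = X 0 0 * (X.submatrix Fin.succ Fin.succ).det := by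
  rw [Matrix.det_succ_column_zero, Fin.sum_univ_succ,
    Finset.sum_eq_zero fun i _ => by rw [hX i]; ring]
  simp

end Pattern

lemma mem_spectrum_iff_det {ι : Type*} [Fintype ι] [DecidableEq ι] (M : Matrix ι ι ℂ) (x : ℂ) :
    x ∈ spectrum ℂ M ↔ (algebraMap ℂ (Matrix ι ι ℂ) x - M).det = 0 := by
  rw [spectrum.mem_iff, Matrix.isUnit_iff_isUnit_det, isUnit_iff_ne_zero, not_not]

lemma exists_diag_fin : ∀ (m : ℕ) (M : Matrix (Fin m) (Fin m) ℂ),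
    ∃ d : Fin m → ℂ, (∀ n : ℕ, (M ^ n).trace = ∑ k, d k ^ n) ∧ spectrum ℂ M = Set.range d := by
  intro m
  induction m with
  | zero =>
    intro M
    refine ⟨Fin.elim0, fun n => ?_, ?_⟩
    · simp [Matrix.trace]
    · ext x
      simp only [Set.mem_range]
      constructor
      · intro hx
        exact absurd (isUnit_of_subsingleton _) (spectrum.mem_iff.mp hx)
      · rintro ⟨k, -⟩
        exact k.elim0
  | succ m ih =>
    intro M
    set f := Matrix.toLinAlgEquiv' M with hfdef
    obtain ⟨μ, hμ⟩ := Module.End.exists_eigenvalue (f : Module.End ℂ (Fin (m+1) → ℂ))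
    obtain ⟨v, hv⟩ := hμ.exists_hasEigenvector
    have hv0 : v ≠ 0 := hv.2
    have hfv : f v = μ • v := hv.apply_eq_smul
    have hli : LinearIndepOn ℂ id ({v} : Set (Fin (m+1) → ℂ)) :=
      LinearIndepOn.singleton hv0
    letI : Fintype (hli.extend (Set.subset_univ _)) :=
      FiniteDimensional.fintypeBasisIndex (Module.Basis.extend hli)
    have hcard : Fintype.card (hli.extend (Set.subset_univ _)) = m + 1 := by
      rw [← Module.finrank_eq_card_basis (Module.Basis.extend hli),
        Module.finrank_fintype_fun_eq_card, Fintype.card_fin]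
    have hvs : v ∈ hli.extend (Set.subset_univ _) := hli.subset_extend _ (Set.mem_singleton v)
    set e0 : (hli.extend (Set.subset_univ _)) ≃ Fin (m+1) := Fintype.equivFinOfCardEq hcard
      with he0
    set e : (hli.extend (Set.subset_univ _)) ≃ Fin (m+1) :=
      e0.trans (Equiv.swap (e0 ⟨v, hvs⟩) 0) with he
    set bb := (Module.Basis.extend hli).reindex e with hbb
    have hbb0 : bb 0 = v := by
      rw [hbb, Module.Basis.reindex_apply]
      have h0 : e.symm 0 = ⟨v, hvs⟩ := by
        rw [he, Equiv.symm_trans_apply, Equiv.symm_swap, Equiv.swap_apply_right,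
          Equiv.symm_apply_apply]
      rw [h0, Module.Basis.extend_apply_self]
    set M' := LinearMap.toMatrixAlgEquiv bb f with hM'
    have hMM : ∀ g : (Fin (m+1) → ℂ) →ₗ[ℂ] (Fin (m+1) → ℂ),
        LinearMap.toMatrixAlgEquiv bb g = LinearMap.toMatrix bb bb g := fun g => by
      ext i j
      rw [LinearMap.toMatrixAlgEquiv_apply, LinearMap.toMatrix_apply]
    have hlin' : ∀ X : Matrix (Fin (m+1)) (Fin (m+1)) ℂ,
        Matrix.toLinAlgEquiv' X = Matrix.toLin' X := fun X =>
      LinearMap.ext fun w => by rw [Matrix.toLinAlgEquiv'_apply, Matrix.toLin'_apply]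
    have htr : ∀ n : ℕ, (M' ^ n).trace = (M ^ n).trace := by
      intro n
      have h1 : M' ^ n = LinearMap.toMatrixAlgEquiv bb (f ^ n) := by
        rw [hM', ← map_pow]
      rw [h1, hMM, ← LinearMap.trace_eq_matrix_trace,
        show f ^ n = Matrix.toLinAlgEquiv' (M ^ n) by rw [hfdef, ← map_pow],
        hlin', LinearMap.trace_eq_matrix_trace ℂ (Pi.basisFun ℂ (Fin (m+1))),
        LinearMap.toMatrix_eq_toMatrix', LinearMap.toMatrix'_toLin']
    have hsp : spectrum ℂ M' = spectrum ℂ M := by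
      rw [hM', AlgEquiv.spectrum_eq, hfdef, AlgEquiv.spectrum_eq]
    have hcol : ColZero M' := by
      intro j
      rw [hM', LinearMap.toMatrixAlgEquiv_apply, hbb0, hfv, ← hbb0, map_smul,
        Module.Basis.repr_self]
      simp [Finsupp.single_apply, (Fin.succ_ne_zero j).symm]
    have h00 : M' 0 0 = μ := by
      rw [hM', LinearMap.toMatrixAlgEquiv_apply, hbb0, hfv, ← hbb0, map_smul,
        Module.Basis.repr_self]
      simp
    obtain ⟨d', hd'tr, hd'sp⟩ := ih (M'.submatrix Fin.succ Fin.succ)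
    refine ⟨Fin.cons μ d', fun n => ?_, ?_⟩
    · rw [← htr n, trace_fin_succ, (colZero_pow hcol n).2.1, (colZero_pow hcol n).2.2,
        hd'tr n, h00, Fin.sum_univ_succ]
      simp
    · rw [← hsp]
      ext x
      rw [mem_spectrum_iff_det]
      have hcolZ : ColZero (algebraMap ℂ (Matrix (Fin (m+1)) (Fin (m+1)) ℂ) x - M') := by
        intro j
        rw [Matrix.sub_apply, Matrix.algebraMap_matrix_apply, hcol j]
        simp [Fin.succ_ne_zero j]
      rw [colZero_det hcolZ]
      have h1 : (algebraMap ℂ (Matrix (Fin (m+1)) (Fin (m+1)) ℂ) x - M') 0 0 = x - μ := by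
        rw [Matrix.sub_apply, Matrix.algebraMap_matrix_apply, h00]
        simp
      have h2 : (algebraMap ℂ (Matrix (Fin (m+1)) (Fin (m+1)) ℂ) x - M').submatrix
            Fin.succ Fin.succ
          = algebraMap ℂ (Matrix (Fin m) (Fin m) ℂ) x - M'.submatrix Fin.succ Fin.succ := by
        ext i j
        rw [Matrix.submatrix_apply, Matrix.sub_apply, Matrix.sub_apply,
          Matrix.algebraMap_matrix_apply, Matrix.algebraMap_matrix_apply]
        simp [Fin.succ_inj]
      rw [h1, h2, mul_eq_zero, sub_eq_zero, ← mem_spectrum_iff_det, hd'sp]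
      simp only [Fin.range_cons, Set.mem_insert_iff, Set.mem_range, eq_comm]

/-- diagonal data for a matrix over an arbitrary finite index type -/
lemma exists_diag {ι : Type} [Fintype ι] [DecidableEq ι] (M : Matrix ι ι ℂ) :
    ∃ d : Fin (Fintype.card ι) → ℂ,
      (∀ n : ℕ, (M ^ n).trace = ∑ k, d k ^ n) ∧ spectrum ℂ M = Set.range d := by
  set q : ι ≃ Fin (Fintype.card ι) := Fintype.equivFin ι with hq
  set M₀ := Matrix.reindexAlgEquiv ℂ ℂ q M with hM₀
  obtain ⟨d, h1, h2⟩ := exists_diag_fin (Fintype.card ι) M₀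
  refine ⟨d, fun n => ?_, ?_⟩
  · rw [← h1 n, hM₀, ← map_pow]
    rw [Matrix.reindexAlgEquiv_apply, Matrix.reindex_apply, Matrix.trace, Matrix.trace]
    exact Fintype.sum_equiv q _ _ fun i => by simp
  · rw [← h2, hM₀]
    exact (AlgEquiv.spectrum_eq (Matrix.reindexAlgEquiv ℂ ℂ q) M).symm

lemma power_sum_bound {ι : Type} [Fintype ι] (d : ι → ℂ) (C : ℝ)
    (h : ∀ n : ℕ, 1 ≤ n → ‖∑ i, d i ^ n‖ ≤ C) :
    ∃ C' : ℝ, 0 ≤ C' ∧ ∀ (i : ι) (n : ℕ), 1 ≤ n → ‖d i‖ ^ n ≤ C' * C := by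
  classical
  set s : Finset ℂ := Finset.image d Finset.univ with hs
  set u : Fin s.card → ℂ := fun k => (s.equivFin.symm k : ℂ) with hu
  have hu_inj : Function.Injective u := Subtype.val_injective.comp s.equivFin.symm.injective
  have hmem : ∀ k, u k ∈ s := fun k => (s.equivFin.symm k).2
  set mm : Fin s.card → ℕ := fun k => (Finset.filter (fun i => d i = u k) Finset.univ).card
    with hmm
  have hmm_pos : ∀ k, 0 < mm k := by
    intro k
    have := hmem k
    rw [hs, Finset.mem_image] at this
    obtain ⟨i, -, hi⟩ := this
    exact Finset.card_pos.mpr ⟨i, Finset.mem_filter.mpr ⟨Finset.mem_univ i, hi⟩⟩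
  have hgroup : ∀ N : ℕ, (∑ i, d i ^ N) = ∑ k, (mm k : ℂ) * u k ^ N := by
    intro N
    have h1 : ∀ y ∈ s, ∀ i ∈ Finset.filter (fun i => d i = y) Finset.univ, d i ^ N = y ^ N :=
      fun y _ i hi => by rw [(Finset.mem_filter.mp hi).2]
    rw [← Finset.sum_fiberwise_of_maps_to (g := d) (t := s)
      (fun i _ => Finset.mem_image_of_mem d (Finset.mem_univ i)) (fun i => d i ^ N)]
    rw [← Finset.sum_coe_sort s, ← Equiv.sum_comp s.equivFin.symm]
    refine Finset.sum_congr rfl fun k _ => ?_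
    rw [Finset.sum_congr rfl (h1 (u k) (hmem k)), Finset.sum_const, nsmul_eq_mul]
  -- Vandermonde inversion
  set W : Matrix (Fin s.card) (Fin s.card) ℂ := (Matrix.vandermonde u).transpose with hW
  have hdet : IsUnit W.det := by
    rw [hW, Matrix.det_transpose, isUnit_iff_ne_zero, Ne, Matrix.det_vandermonde_eq_zero_iff]
    rintro ⟨i, j, hij, hne⟩
    exact hne (hu_inj hij)
  have hvec : ∀ N : ℕ, W.mulVec (fun k => (mm k : ℂ) * u k ^ N)
      = fun j : Fin s.card => ∑ i, d i ^ (N + (j : ℕ)) := by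
    intro N
    funext j
    rw [hgroup (N + (j : ℕ))]
    simp only [Matrix.mulVec, dotProduct, hW, Matrix.transpose_apply,
      Matrix.vandermonde_apply]
    refine Finset.sum_congr rfl fun k _ => ?_
    rw [pow_add]
    ring
  obtain ⟨Wi, hWi⟩ : ∃ Wi, Wi = W⁻¹ := ⟨_, rfl⟩
  have hwinv : ∀ N : ℕ, (fun k => (mm k : ℂ) * u k ^ N)
      = Wi.mulVec (fun j : Fin s.card => ∑ i, d i ^ (N + (j : ℕ))) := by
    intro N
    rw [hWi, ← hvec N, Matrix.mulVec_mulVec, Matrix.nonsing_inv_mul W hdet, Matrix.one_mulVec]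

  clear hWi hvec hdet
  refine ⟨∑ k, ∑ j, ‖Wi k j‖, by positivity, ?_⟩
  intro i n hn
  have hC : 0 ≤ C := le_trans (norm_nonneg _) (h 1 le_rfl)
  have hdi : d i ∈ s := Finset.mem_image_of_mem d (Finset.mem_univ i)
  obtain ⟨k0, hk0⟩ : ∃ k0, u k0 = d i := ⟨s.equivFin ⟨d i, hdi⟩, by
    rw [hu]; simp⟩
  have hineq1 : ‖d i‖ ^ n ≤ ‖(mm k0 : ℂ) * u k0 ^ n‖ := by
    rw [norm_mul, norm_pow, hk0, Complex.norm_natCast]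
    have h1 : (1 : ℝ) ≤ (mm k0 : ℝ) := by exact_mod_cast hmm_pos k0
    nlinarith [pow_nonneg (norm_nonneg (d i)) n]
  have hineq2 : ‖(mm k0 : ℂ) * u k0 ^ n‖
      ≤ (∑ j, ‖Wi k0 j‖) * C := by
    rw [congrFun (hwinv n) k0]
    simp only [Matrix.mulVec, dotProduct]
    refine le_trans (norm_sum_le _ _) ?_
    rw [Finset.sum_mul]
    refine Finset.sum_le_sum fun j _ => ?_
    rw [norm_mul]
    exact mul_le_mul_of_nonneg_left (h _ (by omega)) (norm_nonneg _)
  refine le_trans hineq1 (le_trans hineq2 ?_)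
  refine mul_le_mul_of_nonneg_right ?_ hC
  exact Finset.single_le_sum (f := fun k => ∑ j, ‖Wi k j‖)
    (fun k _ => by positivity) (Finset.mem_univ k0)

lemma specRad_eq {ι : Type} [Fintype ι] [DecidableEq ι] (M : Matrix ι ι ℂ) {r : ℕ}
    (d : Fin r → ℂ) (hr : 0 < r) (hsp : spectrum ℂ M = Set.range d) :
    ∃ k0 : Fin r, specRad M = ‖d k0‖ ∧
      ∀ k, ‖d k‖ ≤ specRad M := by
  classical
  set F : Finset ℝ := Finset.image (fun k => ‖d k‖) Finset.univ with hF
  have hne : F.Nonempty := ⟨‖d ⟨0, hr⟩‖,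
    Finset.mem_image_of_mem _ (Finset.mem_univ _)⟩
  have himg : (fun z : ℂ => ‖z‖) '' spectrum ℂ M = ↑F := by
    rw [hsp, ← Set.range_comp, hF, Finset.coe_image, Finset.coe_univ, Set.image_univ]
    rfl
  have hspec : specRad M = F.max' hne := by
    rw [specRad, himg, hne.csSup_eq_max']
  obtain ⟨k0, -, hk0⟩ := Finset.mem_image.mp (F.max'_mem hne)
  refine ⟨k0, by rw [hspec, hk0], fun k => ?_⟩
  rw [hspec]
  exact F.le_max' _ (Finset.mem_image_of_mem _ (Finset.mem_univ k))

variable (V)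

/-- Theorem 1.8: for a finite quiver `Q`,
(1) `fpdim Q = 0` iff `Θ(Q) = 0`;
(2) `fpdim Q = 1` iff `Θ(Q) = 1`;
(3) `fpdim Q > 1` iff `Θ(Q) ≥ 2`. -/
theorem fpdim_quiver_trichotomy :
    (fpdimQuiver V = 0 ↔ cycleNumber V = 0) ∧
    (fpdimQuiver V = 1 ↔ cycleNumber V = 1) ∧
    (1 < fpdimQuiver V ↔ 2 ≤ cycleNumber V) := by
  classical
  rcases isEmpty_or_nonempty V with hV | hV
  · -- the empty quiver
    have hsub : Subsingleton (Matrix V V ℂ) := ⟨fun A B => by ext i j; exact isEmptyElim i⟩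
    have hspec : spectrum ℂ (quivAdj V) = ∅ := by
      ext x
      simp only [Set.mem_empty_iff_false, iff_false]
      intro hx
      exact (spectrum.mem_iff.mp hx) (@isUnit_of_subsingleton _ _ hsub _)
    have h0 : fpdimQuiver V = 0 := by
      rw [fpdimQuiver, specRad, hspec, Set.image_empty, Real.sSup_empty]
    have hc : cycleNumber V = 0 := by
      rw [cycleNumber, iSup_of_empty]
      rfl
    rw [h0, hc]
    refine ⟨by simp, by norm_num, by norm_num⟩
  · haveI := hV
    obtain ⟨d, htr, hsp⟩ := exists_diag (quivAdj V)
    have hcard : 0 < Fintype.card V := Fintype.card_pos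
    obtain ⟨k0, hk0, hle⟩ := specRad_eq (quivAdj V) d hcard hsp
    set ρ := specRad (quivAdj V) with hρdef
    have hfp : fpdimQuiver V = ρ := rfl
    have hρ0 : 0 ≤ ρ := hk0 ▸ norm_nonneg _
    have hps : ∀ n : ℕ, ((∑ i : V, nPaths n i i : ℕ) : ℂ) = ∑ k, d k ^ n := by
      intro n
      rw [← trace_quivAdj_pow n, htr n]
    have hup : ∀ n : ℕ, ((∑ i : V, nPaths n i i : ℕ) : ℝ) ≤ ((Fintype.card V : ℕ) : ℝ) * ρ ^ n := by
      intro n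
      have h1 : ‖((∑ i : V, nPaths n i i : ℕ) : ℂ)‖
          = ((∑ i : V, nPaths n i i : ℕ) : ℝ) := Complex.norm_natCast _
      rw [← h1, hps n]
      refine le_trans (norm_sum_le _ _) ?_
      have h2 : ∀ k, ‖d k ^ n‖ ≤ ρ ^ n := fun k => by
        rw [norm_pow]
        exact pow_le_pow_left₀ (norm_nonneg _) (hle k) n
      refine le_trans (Finset.sum_le_sum fun k _ => h2 k) ?_
      rw [Finset.sum_const, Finset.card_univ, Fintype.card_fin, nsmul_eq_mul]
    -- the three implications
    have P0 : cycleNumber V = 0 → fpdimQuiver V = 0 := by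
      intro hΘ
      have hnc : ∀ (i : V) (p : Quiver.Path i i), 0 < p.length → False := by
        intro i p hp
        obtain ⟨y, z, hz, -⟩ := exists_indec_suffix p.length p le_rfl hp
        have h0 : theta V i = 0 :=
          le_antisymm (le_trans (le_iSup (theta V) i) (le_of_eq hΘ)) zero_le
        rw [theta, Set.encard_eq_zero] at h0
        exact absurd (Set.mem_setOf.mpr hz) (by rw [h0]; exact Set.notMem_empty z)
      have hzero : ∀ n, 1 ≤ n → (∑ i : V, nPaths n i i) = 0 := by
        intro n hn
        refine Finset.sum_eq_zero fun i _ => ?_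
        rw [nPaths, Fintype.card_eq_zero_iff]
        exact ⟨fun x => hnc i x.1 (by rw [x.2]; omega)⟩
      obtain ⟨C', hC'0, hC'⟩ := power_sum_bound d 0 (by
        intro n hn
        rw [← hps n, hzero n hn]
        simp)
      have hle0 : ‖d k0‖ ≤ 0 := by
        have h := hC' k0 1 le_rfl
        simpa using h
      rw [hfp, hk0]
      exact le_antisymm hle0 (norm_nonneg _)
    have P1 : cycleNumber V = 1 → fpdimQuiver V = 1 := by
      intro hΘ
      have huniq : ∀ i : V, ∀ z z' : Quiver.Path i i,
          IsIndecCycle V z → IsIndecCycle V z' → z = z' := by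
        intro i z z' hz hz'
        have h1 : theta V i ≤ 1 := le_trans (le_iSup (theta V) i) (le_of_eq hΘ)
        rw [theta, Set.encard_le_one_iff] at h1
        exact h1 z z' hz hz'
      have hTle : ∀ n, (∑ i : V, nPaths n i i) ≤ Fintype.card V := by
        intro n
        calc ∑ i : V, nPaths n i i ≤ ∑ _i : V, 1 :=
              Finset.sum_le_sum fun i _ => nPaths_le_one (huniq i) n
        _ = Fintype.card V := by simp
      have hex : ∃ (i : V) (c : Quiver.Path i i), IsIndecCycle V c := by
        by_contra hcon
        push_neg at hcon
        have hz : cycleNumber V = 0 := by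
          rw [cycleNumber]
          refine le_antisymm (iSup_le fun i => ?_) zero_le
          have he : {p : Quiver.Path i i | IsIndecCycle V p} = ∅ :=
            Set.eq_empty_iff_forall_notMem.mpr (fun p hp => hcon i p hp)
          rw [theta, he, Set.encard_empty]
        rw [hz] at hΘ
        exact absurd hΘ (by norm_num)
      obtain ⟨C', hC'0, hC'⟩ := power_sum_bound d (Fintype.card V) (fun n hn => by
        rw [← hps n, Complex.norm_natCast]
        exact_mod_cast hTle n)
      have hub : ρ ≤ 1 := by
        by_contra hgt
        push_neg at hgt
        obtain ⟨n, hn⟩ := pow_unbounded_of_one_lt (C' * ((Fintype.card V : ℕ) : ℝ)) hgt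
        have h1 : C' * ((Fintype.card V : ℕ) : ℝ) < ρ ^ (n + 1) :=
          lt_of_lt_of_le hn (pow_le_pow_right₀ hgt.le (Nat.le_succ n))
        have h2 := hC' k0 (n + 1) (by omega)
        rw [← hk0] at h2
        linarith
      obtain ⟨i, c, hc⟩ := hex
      have hlow : 1 ≤ ρ := by
        by_contra hlt
        push_neg at hlt
        obtain ⟨k, hk⟩ := exists_pow_lt_of_lt_one
          (show (0:ℝ) < 1 / ((Fintype.card V : ℕ) : ℝ) by positivity) hlt
        have hkL : ρ ^ (k * c.length) ≤ ρ ^ k :=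
          pow_le_pow_of_le_one hρ0 hlt.le (Nat.le_mul_of_pos_right k hc.1)
        have h1 : (1 : ℝ) ≤ ((∑ j : V, nPaths (k * c.length) j j : ℕ) : ℝ) := by
          have ha := one_le_nPaths c k
          have hb : nPaths (k * c.length) i i ≤ ∑ j : V, nPaths (k * c.length) j j :=
            Finset.single_le_sum (f := fun j => nPaths (k * c.length) j j)
              (fun j _ => Nat.zero_le _) (Finset.mem_univ i)
          exact_mod_cast le_trans ha hb
        have h2 := hup (k * c.length)
        have h3 : ((Fintype.card V : ℕ) : ℝ) * ρ ^ (k * c.length) ≤ ((Fintype.card V : ℕ) : ℝ) * ρ ^ k :=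
          mul_le_mul_of_nonneg_left hkL (by positivity)
        have h4 : ((Fintype.card V : ℕ) : ℝ) * ρ ^ k < 1 := by
          have := (lt_div_iff₀ (show (0:ℝ) < ((Fintype.card V : ℕ) : ℝ) by positivity)).mp hk
          linarith
        linarith
      rw [hfp]
      exact le_antisymm hub hlow
    have P2 : 2 ≤ cycleNumber V → 1 < fpdimQuiver V := by
      intro hΘ
      have hex : ∃ i : V, 1 < theta V i := by
        by_contra hcon
        push_neg at hcon
        have h1 : cycleNumber V ≤ 1 := iSup_le hcon
        exact absurd (le_trans hΘ h1) (by norm_num)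
      obtain ⟨i, hi⟩ := hex
      rw [theta, Set.one_lt_encard_iff] at hi
      obtain ⟨c, c', hcm, hcm', hne⟩ := hi
      obtain ⟨L, d1, d2, hL, h1, h2, hdne⟩ := two_cycles c c' hcm hcm' hne
      have key : ∀ k : ℕ, ((2:ℝ)) ^ k ≤ ((Fintype.card V : ℕ) : ℝ) * ρ ^ (k * L) := by
        intro k
        have ha := two_pow_le_nPaths d1 d2 h1 h2 hdne k
        have hb : nPaths (k * L) i i ≤ ∑ j : V, nPaths (k * L) j j :=
          Finset.single_le_sum (f := fun j => nPaths (k * L) j j)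
            (fun j _ => Nat.zero_le _) (Finset.mem_univ i)
        calc ((2:ℝ)) ^ k ≤ ((∑ j : V, nPaths (k * L) j j : ℕ) : ℝ) := by
              exact_mod_cast le_trans ha hb
        _ ≤ _ := hup (k * L)
      rw [hfp]
      by_contra hle1
      push_neg at hle1
      have hbd : ∀ k : ℕ, ((2:ℝ)) ^ k ≤ ((Fintype.card V : ℕ) : ℝ) := by
        intro k
        refine le_trans (key k) ?_
        have := pow_le_one₀ hρ0 hle1 (n := k * L)
        nlinarith
      have hNN := hbd (Fintype.card V)
      have : ((Fintype.card V : ℕ) : ℝ) < 2 ^ (Fintype.card V) := by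
        exact_mod_cast Nat.lt_two_pow_self
      linarith
    -- trichotomy on the cycle number
    have tri : cycleNumber V = 0 ∨ cycleNumber V = 1 ∨ 2 ≤ cycleNumber V := by
      rcases eq_or_ne (cycleNumber V) 0 with h | h
      · exact Or.inl h
      rcases eq_or_ne (cycleNumber V) 1 with h1 | h1
      · exact Or.inr (Or.inl h1)
      refine Or.inr (Or.inr ?_)
      have h0lt : 0 < cycleNumber V := pos_iff_ne_zero.mpr h
      have h1le : 1 ≤ cycleNumber V := by simpa using Order.add_one_le_of_lt h0lt
      have h1lt : 1 < cycleNumber V := lt_of_le_of_ne h1le (Ne.symm h1)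
      have := Order.add_one_le_of_lt h1lt
      simpa [one_add_one_eq_two] using this
    rcases tri with h | h | h
    · have hf := P0 h
      rw [hf, h]
      exact ⟨by simp, by norm_num, by norm_num⟩
    · have hf := P1 h
      rw [hf, h]
      refine ⟨by norm_num, by simp, ?_⟩
      constructor
      · intro hx
        exact absurd hx (by norm_num)
      · intro hx
        exact absurd hx (by norm_num)
    · have hf := P2 h
      refine ⟨?_, ?_, ?_⟩
      · constructor
        · intro hx
          rw [hx] at hf
          exact absurd hf (by norm_num)
        · intro hx
          rw [hx] at h
          exact absurd h (by norm_num)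
      · constructor
        · intro hx
          rw [hx] at hf
          exact absurd hf (by norm_num)
        · intro hx
          rw [hx] at h
          exact absurd h (by norm_num)
      · exact ⟨fun _ => h, fun _ => hf⟩
end
end

section
/- Let C be a k-linear category with finite-dimensional Hom spaces, σ an endofunctor of C, and B a set of bricks in C admitting a σ-decomposition {B^λ}_{λ∈Λ} over a totally ordered set Λ: B is the disjoint union of the B^λ, and Hom_C(X, σ(Y)) = 0 whenever X ∈ B^λ, Y ∈ B^δ and λ < δ. Then for every positive integer n, fpdim^n|_B(σ) ≤ sup over λ ∈ Λ and m ≤ n of fpdim^m|_{B^λ}(σ). -/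
open CategoryTheory CategoryTheory.Limits Filter
open scoped ENNReal Classical

noncomputable section

section AuxSpec
open Polynomial

lemma mem_spectrum_iff_isRoot_charpoly {ι : Type*} [Fintype ι] [DecidableEq ι]
    (M : Matrix ι ι ℂ) (μ : ℂ) : μ ∈ spectrum ℂ M ↔ M.charpoly.IsRoot μ := by
  have hdet : M.charpoly.eval μ = (algebraMap ℂ (Matrix ι ι ℂ) μ - M).det := by
    have h1 : M.charpoly.eval μ = ((M.charmatrix).map (Polynomial.evalRingHom μ)).det := by
      rw [Matrix.charpoly]
      rw [show M.charmatrix.map ⇑(Polynomial.evalRingHom μ)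
        = (Polynomial.evalRingHom μ).mapMatrix M.charmatrix from
        (RingHom.mapMatrix_apply _ _).symm, ← RingHom.map_det]
      rfl
    have h2 : (M.charmatrix).map (Polynomial.evalRingHom μ)
        = algebraMap ℂ (Matrix ι ι ℂ) μ - M := by
      ext i j
      by_cases h : i = j
      · subst h
        simp [Matrix.charmatrix_apply_eq, Matrix.algebraMap_matrix_apply]
      · simp [Matrix.charmatrix_apply_ne _ _ _ h, Matrix.algebraMap_matrix_apply, h]
    rw [h1, h2]
  rw [spectrum.mem_iff, Matrix.isUnit_iff_isUnit_det, isUnit_iff_ne_zero, not_not,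
    Polynomial.IsRoot, hdet]

lemma spectrum_finite' {ι : Type*} [Fintype ι] [DecidableEq ι] (M : Matrix ι ι ℂ) :
    (spectrum ℂ M).Finite := by
  apply Set.Finite.subset (M.charpoly.roots.toFinset : Finset ℂ).finite_toSet
  intro μ hμ
  rw [(mem_spectrum_iff_isRoot_charpoly M μ)] at hμ
  simp only [Finset.coe_sort_coe, Finset.mem_coe, Multiset.mem_toFinset, Polynomial.mem_roots,
    M.charpoly_monic.ne_zero, ne_eq, not_false_eq_true, true_and]
  exact hμ


lemma exists_abs_eq_specRad {n : ℕ} (hn : 1 ≤ n) (M : Matrix (Fin n) (Fin n) ℂ) :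
    ∃ μ ∈ spectrum ℂ M, specRad M = ‖μ‖ := by
  have hne : (spectrum ℂ M).Nonempty := by
    have hnd : 0 < M.charpoly.natDegree := by
      rw [Matrix.charpoly_natDegree_eq_dim]; simp only [Fintype.card_fin]; omega
    obtain ⟨z, hz⟩ := Complex.exists_root (Polynomial.natDegree_pos_iff_degree_pos.mp hnd)
    exact ⟨z, (mem_spectrum_iff_isRoot_charpoly M z).mpr hz⟩
  obtain ⟨μ, hμ, hμ2⟩ := (hne.image (fun z : ℂ => ‖z‖)).csSup_mem ((spectrum_finite' M).image _)
  exact ⟨μ, hμ, hμ2.symm⟩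

lemma abs_le_specRad {ι : Type*} [Fintype ι] [DecidableEq ι] {M : Matrix ι ι ℂ} {μ : ℂ}
    (hμ : μ ∈ spectrum ℂ M) : ‖μ‖ ≤ specRad M :=
  le_csSup ((spectrum_finite' M).image _).bddAbove ⟨μ, hμ, rfl⟩

end AuxSpec

variable (k : Type) [Field k]
section CatDefs

variable {C : Type*} [Category C] [Preadditive C] [CategoryTheory.Linear k C]

/-- A brick set: a finite family of objects with `dim Hom(X i, X j) = δ_{ij}`. -/
def IsBrickSet {n : ℕ} (φ : Fin n → C) : Prop :=
  ∀ i j, Module.finrank k (φ i ⟶ φ j) = if i = j then 1 else 0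

/-- The adjacency matrix of a family of objects with respect to an endofunctor `σ`:
its `(i,j)` entry is `dim_k Hom(X i, σ (X j))`. -/
def adjMat (σ : C ⥤ C) {n : ℕ} (φ : Fin n → C) : Matrix (Fin n) (Fin n) ℂ :=
  fun i j => (Module.finrank k (φ i ⟶ σ.obj (φ j)) : ℂ)

/-- The `n`-th Frobenius-Perron dimension of an endofunctor: the supremum of the spectral
radii of adjacency matrices of brick sets of size `n`. -/
def fpdimN (σ : C ⥤ C) (n : ℕ) : ℝ≥0∞ :=
  ⨆ (φ : Fin n → C) (_ : IsBrickSet k φ), ENNReal.ofReal (specRad (adjMat k σ φ))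

/-- The Frobenius-Perron dimension of an endofunctor (testing against brick sets). -/
def fpdim (σ : C ⥤ C) : ℝ≥0∞ := ⨆ n : ℕ, fpdimN k σ (n + 1)

end CatDefs

section Restricted

variable {C : Type*} [Category C] [Preadditive C] [CategoryTheory.Linear k C]

/-- The `n`-th Frobenius-Perron dimension of an endofunctor `σ` restricted to a set of
objects `B`: the supremum of spectral radii of adjacency matrices over brick sets of
size `n` all of whose members lie in `B`. -/
def fpdimResN (B : Set C) (σ : C ⥤ C) (n : ℕ) : ℝ≥0∞ :=
  ⨆ (φ : Fin n → C) (_ : (∀ i, φ i ∈ B) ∧ IsBrickSet k φ),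
    ENNReal.ofReal (specRad (adjMat k σ φ))

end Restricted

/-- Lemma 6.1: let `C` be a `k`-linear Hom-finite category, `σ` an endofunctor and `B`
a set of bricks with a `σ`-decomposition `{B^λ}` over a totally ordered set `Λ` (i.e.
`B` is the disjoint union of the `B^λ` and `Hom(X, σ Y) = 0` whenever `X ∈ B^λ`,
`Y ∈ B^δ`, `λ < δ`). Then for every `n ≥ 1`,
`fpdim^n|_B(σ) ≤ sup_{λ ∈ Λ, m ≤ n} fpdim^m|_{B^λ}(σ)`. -/
theorem fpdim_sigma_decomposition
    {C : Type*} [Category C] [Preadditive C] [CategoryTheory.Linear k C]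
    [∀ X Y : C, FiniteDimensional k (X ⟶ Y)]
    (σ : C ⥤ C) (Λ : Type*) [LinearOrder Λ] (B : Set C) (fam : Λ → Set C)
    (hbricks : ∀ X ∈ B, Module.finrank k (X ⟶ X) = 1)
    (hcover : B = ⋃ l : Λ, fam l)
    (hdisj : ∀ l l' : Λ, l ≠ l' → Disjoint (fam l) (fam l'))
    (hvanish : ∀ l l' : Λ, l < l' → ∀ X ∈ fam l, ∀ Y ∈ fam l',
      Subsingleton (X ⟶ σ.obj Y)) :
    ∀ n : ℕ, 1 ≤ n →
      fpdimResN k B σ n ≤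
        ⨆ (l : Λ) (m : ℕ) (_ : 1 ≤ m ∧ m ≤ n), fpdimResN k (fam l) σ m := by
  
  intro n hn
  unfold fpdimResN
  refine iSup₂_le fun φ hφ => ?_
  obtain ⟨hmem, hbrick⟩ := hφ
  have hbex : ∀ i, ∃ l, φ i ∈ fam l := fun i =>
    Set.mem_iUnion.mp (by rw [← hcover]; exact hmem i)
  choose b hb using hbex
  have htri : (adjMat k σ φ).BlockTriangular (fun i => OrderDual.toDual (b i)) := by
    intro i j h
    have hlt : b i < b j := h
    haveI := hvanish (b i) (b j) hlt (φ i) (hb i) (φ j) (hb j)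
    show ((Module.finrank k (φ i ⟶ σ.obj (φ j)) : ℂ)) = 0
    rw [Module.finrank_zero_of_subsingleton]; simp
  obtain ⟨μ, hμ, hμeq⟩ := exists_abs_eq_specRad hn (adjMat k σ φ)
  have hroot : (adjMat k σ φ).charpoly.IsRoot μ :=
    (mem_spectrum_iff_isRoot_charpoly _ μ).mp hμ
  rw [htri.charpoly, Polynomial.IsRoot, Polynomial.eval_prod,
    Finset.prod_eq_zero_iff] at hroot
  obtain ⟨a, ha, hroota⟩ := hroot
  set l := OrderDual.ofDual a with hl
  haveI : Nonempty {i // (fun i => OrderDual.toDual (b i)) i = a} := by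
    obtain ⟨i, _, hi⟩ := Finset.mem_image.mp ha
    exact ⟨⟨i, hi⟩⟩
  set m := Fintype.card {i // (fun i => OrderDual.toDual (b i)) i = a} with hm
  have hm1 : 1 ≤ m := Fintype.card_pos
  have hmn : m ≤ n := by
    simpa using Fintype.card_subtype_le (fun i : Fin n => OrderDual.toDual (b i) = a)
  set e := (Fintype.equivFin {i // (fun i => OrderDual.toDual (b i)) i = a}).symm with he
  set ψ : Fin m → C := fun j => φ (e j) with hψ
  have hψmem : ∀ j, ψ j ∈ fam l := fun j => by
    have h1 := hb ((e j : {i // (fun i => OrderDual.toDual (b i)) i = a}) : Fin n)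
    have h2 : b ((e j : {i // (fun i => OrderDual.toDual (b i)) i = a}) : Fin n) = l := (e j).2
    rw [h2] at h1
    exact h1
  have hψbrick : IsBrickSet k ψ := by
    intro i j
    rw [hψ]
    simp only []
    rw [hbrick]
    by_cases h : i = j
    · subst h; simp
    · rw [if_neg h, if_neg]
      intro h'
      exact h (e.injective (Subtype.ext h'))
  have hcp : (adjMat k σ ψ).charpoly
      = ((adjMat k σ φ).toSquareBlock (fun i => OrderDual.toDual (b i)) a).charpoly := by
    have heq : adjMat k σ ψ = Matrix.reindex e.symm e.symm
        ((adjMat k σ φ).toSquareBlock (fun i => OrderDual.toDual (b i)) a) := by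
      ext i j; rfl
    rw [heq, Matrix.charpoly_reindex]
  have hμ2 : μ ∈ spectrum ℂ (adjMat k σ ψ) := by
    rw [mem_spectrum_iff_isRoot_charpoly, Polynomial.IsRoot, hcp]
    exact hroota
  calc ENNReal.ofReal (specRad (adjMat k σ φ))
      = ENNReal.ofReal (‖μ‖) := by rw [hμeq]
    _ ≤ ENNReal.ofReal (specRad (adjMat k σ ψ)) :=
        ENNReal.ofReal_le_ofReal (abs_le_specRad hμ2)
    _ ≤ fpdimResN k (fam l) σ m := by
        unfold fpdimResN
        exact le_iSup₂ (f := fun (φ' : Fin m → C)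
          (_ : (∀ i, φ' i ∈ fam l) ∧ IsBrickSet k φ') =>
          ENNReal.ofReal (specRad (adjMat k σ φ'))) ψ ⟨hψmem, hψbrick⟩
    _ ≤ ⨆ (l : Λ) (m : ℕ) (_ : 1 ≤ m ∧ m ≤ n), fpdimResN k (fam l) σ m :=
        le_iSup_of_le l (le_iSup_of_le m (le_iSup_of_le ⟨hm1, hmn⟩ le_rfl))
end
end

section
/- Let T be a pretriangulated k-linear category with finite-dimensional Hom spaces and suspension Σ. Then fpc(T) ≤ cx(T), where fpc(T) = fpg(Σ) + 1 is the Frobenius–Perron complexity and cx(T) = inf{ d : for all objects X, Y of T, dim_k Hom_T(X, Σ^n(Y))/n^{d-1} → 0 as n → ∞ } is the complexity of T. -/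
open CategoryTheory CategoryTheory.Limits Filter
open scoped ENNReal Classical

noncomputable section

variable (k : Type) [Field k]
section TriDefs

variable {C : Type*} [Category C] [Preadditive C] [CategoryTheory.Linear k C] [HasShift C ℤ]

/-- An atomic set in a category with shift: a brick set of objects `X` that moreover satisfy
`Hom(X, X⟦m⟧) = 0` for all `m < 0`. -/
def IsAtomicSet {n : ℕ} (φ : Fin n → C) : Prop :=
  IsBrickSet k φ ∧
    ∀ i (m : ℤ), m < 0 → Subsingleton (φ i ⟶ (shiftFunctor C m).obj (φ i))

/-- An atomic object: a brick `X` with `Hom(X, X⟦m⟧) = 0` for all `m < 0`. -/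
def IsAtomicObj (X : C) : Prop :=
  Module.finrank k (X ⟶ X) = 1 ∧
    ∀ m : ℤ, m < 0 → Subsingleton (X ⟶ (shiftFunctor C m).obj X)

/-- The `n`-th Frobenius-Perron dimension of an endofunctor of a category with shift,
testing against atomic sets whose members satisfy the predicate `P`. -/
def fpdimTN (P : C → Prop) (σ : C ⥤ C) (n : ℕ) : ℝ≥0∞ :=
  ⨆ (φ : Fin n → C) (_ : (∀ i, P (φ i)) ∧ IsAtomicSet k φ),
    ENNReal.ofReal (specRad (adjMat k σ φ))

/-- The Frobenius-Perron dimension of an endofunctor of a category with shift,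
testing against atomic sets whose members satisfy the predicate `P`. -/
def fpdimT (P : C → Prop) (σ : C ⥤ C) : ℝ≥0∞ := ⨆ n : ℕ, fpdimTN k P σ (n + 1)

/-- `log_m r`, with the convention that `log_m 0 = -∞`. -/
def logn (r : ℝ) (m : ℕ) : EReal :=
  if r = 0 then ⊥ else ((Real.log r / Real.log m : ℝ) : EReal)

/-- The Frobenius-Perron growth: the supremum over atomic sets `φ` (with members
satisfying `P`) of `limsup_m log_m ρ(A(φ, Σ^m))`. -/
def fpg (P : C → Prop) : EReal :=
  ⨆ (n : ℕ) (φ : Fin (n + 1) → C) (_ : (∀ i, P (φ i)) ∧ IsAtomicSet k φ),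
    limsup (fun m : ℕ => logn (specRad (adjMat k (shiftFunctor C (m : ℤ)) φ)) m) atTop

/-- The Frobenius-Perron curvature: the supremum over atomic sets `φ` (with members
satisfying `P`) of `limsup_m ρ(A(φ, Σ^m))^{1/m}`. -/
def fpv (P : C → Prop) : ℝ≥0∞ :=
  ⨆ (n : ℕ) (φ : Fin (n + 1) → C) (_ : (∀ i, P (φ i)) ∧ IsAtomicSet k φ),
    limsup (fun m : ℕ =>
      ENNReal.ofReal (specRad (adjMat k (shiftFunctor C (m : ℤ)) φ) ^ ((m : ℝ)⁻¹))) atTop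

/-- The Frobenius-Perron global dimension: `sup { n : ℤ | fpdim (Σ^n) ≠ 0 }`. -/
def fpgldim (P : C → Prop) : EReal :=
  sSup ((fun n : ℤ => ((n : ℝ) : EReal)) '' {n : ℤ | fpdimT k P (shiftFunctor C n) ≠ 0})

end TriDefs

section Complexity

variable (T : Type*) [Category T] [Preadditive T] [CategoryTheory.Linear k T]
  [HasShift T ℤ]

/-- The complexity of a category with shift:
`cx(T) = inf { d : ∀ X Y, dim_k Hom(X, Σ^n Y) / n^{d-1} → 0 }` (as an extended real,
with `inf ∅ = +∞`). -/
def cxT : EReal :=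
  sInf ((fun d : ℝ => (d : EReal)) ''
    {d : ℝ | ∀ X Y : T, Tendsto
      (fun n : ℕ => (Module.finrank k (X ⟶ (shiftFunctor T (n : ℤ)).obj Y) : ℝ) /
        (n : ℝ) ^ (d - 1)) atTop (nhds 0)})

end Complexity


attribute [local instance] Matrix.linftyOpNormedRing Matrix.linftyOpNormedAlgebra
  Matrix.linftyOpNormedSpace

lemma specRad_nonneg {ι : Type*} [Fintype ι] [DecidableEq ι] (M : Matrix ι ι ℂ) :
    0 ≤ specRad M :=
  Real.sSup_nonneg (by rintro x ⟨z, _, rfl⟩; exact norm_nonneg z)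

lemma specRad_le_card_mul {n : ℕ} (M : Matrix (Fin (n + 1)) (Fin (n + 1)) ℂ) {c : ℝ}
    (hc : 0 ≤ c) (h : ∀ i j, ‖M i j‖ ≤ c) :
    specRad M ≤ (n + 1) * c := by
  haveI : CompleteSpace (Matrix (Fin (n + 1)) (Fin (n + 1)) ℂ) :=
    FiniteDimensional.complete ℂ _
  apply Real.sSup_le _ (by positivity)
  rintro x ⟨z, hz, rfl⟩
  have h2 : ‖z‖ ≤ ‖M‖ := spectrum.norm_le_norm_of_mem hz
  have h3 : ‖M‖₊ ≤ (n + 1) * c.toNNReal := by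
    rw [Matrix.linfty_opNNNorm_def]
    refine Finset.sup_le fun i _ => ?_
    calc ∑ j, ‖M i j‖₊ ≤ ∑ _j : Fin (n + 1), c.toNNReal :=
          Finset.sum_le_sum fun j _ =>
            (Real.le_toNNReal_iff_coe_le hc).mpr (by rw [coe_nnnorm]; exact h i j)
      _ = (n + 1) * c.toNNReal := by simp [Finset.sum_const, mul_comm]
  have h4 : ‖M‖ ≤ (n + 1) * c := by
    have := NNReal.coe_le_coe.mpr h3
    push_cast at this
    rwa [Real.coe_toNNReal _ hc] at this
  exact le_trans h2 h4

lemma EReal.le_coe_of_forall_lt {x : EReal} {y : ℝ}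
    (h : ∀ c : ℝ, y < c → x ≤ (c : EReal)) : x ≤ (y : EReal) := by
  by_contra hx
  push_neg at hx
  obtain ⟨c, hc1, hc2⟩ := EReal.lt_iff_exists_real_btwn.mp hx
  exact absurd (h c (by exact_mod_cast hc1)) (not_le.mpr hc2)

/-- Theorem 0.5 / 8.3: for a pretriangulated `k`-linear Hom-finite category `T`,
the Frobenius-Perron complexity `fpc(T) = fpg(Σ) + 1` is at most the complexity
`cx(T)`. -/
theorem fpc_le_cx
    (T : Type*) [Category T] [Preadditive T] [CategoryTheory.Linear k T]
    [HasZeroObject T] [HasShift T ℤ] [∀ n : ℤ, (shiftFunctor T n).Additive]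
    [Pretriangulated T] [∀ X Y : T, FiniteDimensional k (X ⟶ Y)] :
    fpg k (fun _ : T => True) + 1 ≤ cxT k T := by
  refine le_sInf ?_
  rintro x ⟨d, hd, rfl⟩
  have key : fpg k (fun _ : T => True) ≤ ((d - 1 : ℝ) : EReal) := by
    refine iSup_le fun n => iSup_le fun φ => iSup_le fun hφ => ?_
    refine EReal.le_coe_of_forall_lt fun c hc => ?_
    refine Filter.limsup_le_of_le (by isBoundedDefault) ?_
    have h1 : ∀ᶠ m : ℕ in atTop, ∀ i j : Fin (n + 1),
        (Module.finrank k (φ i ⟶ (shiftFunctor T (m : ℤ)).obj (φ j)) : ℝ) ≤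
          (m : ℝ) ^ (d - 1) := by
      rw [Filter.eventually_all]
      intro i
      rw [Filter.eventually_all]
      intro j
      have := (hd (φ i) (φ j)).eventually_lt_const one_pos
      filter_upwards [this, Filter.eventually_ge_atTop 1] with m hm hm1
      have hpow : (0 : ℝ) < (m : ℝ) ^ (d - 1) :=
        Real.rpow_pos_of_pos (by exact_mod_cast hm1) _
      have := (div_lt_one hpow).mp hm
      linarith
    have h2 : ∀ᶠ m : ℕ in atTop,
        Real.log (n + 1) / Real.log m + (d - 1) ≤ c := by
      have ht : Filter.Tendsto (fun m : ℕ => Real.log (n + 1) / Real.log m + (d - 1))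
          atTop (nhds (d - 1)) := by
        have hlog : Filter.Tendsto (fun m : ℕ => Real.log m) atTop atTop :=
          Real.tendsto_log_atTop.comp tendsto_natCast_atTop_atTop
        have : Filter.Tendsto (fun m : ℕ => Real.log (n + 1) / Real.log m) atTop (nhds 0) := by
          simpa [div_eq_mul_inv] using hlog.inv_tendsto_atTop.const_mul (Real.log (n + 1))
        simpa using this.add_const (d - 1)
      exact (ht.eventually_lt_const hc).mono fun m hm => hm.le
    filter_upwards [h1, h2, Filter.eventually_ge_atTop 2] with m hm1 hm2 hm3
    set M := adjMat k (shiftFunctor T (m : ℤ)) φ with hM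
    by_cases hzero : specRad M = 0
    · simp [logn, hzero]
    · have hmr : (2 : ℝ) ≤ (m : ℝ) := by exact_mod_cast hm3
      have hlogm : 0 < Real.log m := Real.log_pos (by linarith)
      have hpow : (0 : ℝ) < (m : ℝ) ^ (d - 1) := Real.rpow_pos_of_pos (by linarith) _
      have hle : specRad M ≤ (n + 1) * (m : ℝ) ^ (d - 1) := by
        refine specRad_le_card_mul M hpow.le fun i j => ?_
        have : ‖M i j‖ =
            (Module.finrank k (φ i ⟶ (shiftFunctor T (m : ℤ)).obj (φ j)) : ℝ) := by
          simp [hM, adjMat]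
        rw [this]
        exact hm1 i j
      have hpos : 0 < specRad M := lt_of_le_of_ne (specRad_nonneg M) (Ne.symm hzero)
      have hlog : Real.log (specRad M) ≤ Real.log (n + 1) + (d - 1) * Real.log m := by
        calc Real.log (specRad M) ≤ Real.log ((n + 1) * (m : ℝ) ^ (d - 1)) :=
              Real.log_le_log hpos hle
          _ = Real.log (n + 1) + (d - 1) * Real.log m := by
              rw [Real.log_mul (by positivity) (ne_of_gt hpow),
                Real.log_rpow (by linarith)]
      have hdiv : Real.log (specRad M) / Real.log m ≤ c := by
        have h5 : Real.log (specRad M) / Real.log m ≤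
            (Real.log (n + 1) + (d - 1) * Real.log m) / Real.log m :=
          div_le_div_of_nonneg_right hlog hlogm.le
        have h6 : (Real.log (n + 1) + (d - 1) * Real.log m) / Real.log m =
            Real.log (n + 1) / Real.log m + (d - 1) := by
          field_simp
        linarith [h5, h6 ▸ h5]
      simp only [logn, hzero, if_false]
      exact_mod_cast EReal.coe_le_coe_iff.mpr hdiv
  calc fpg k (fun _ : T => True) + 1 ≤ ((d - 1 : ℝ) : EReal) + 1 :=
        add_le_add_left key 1
    _ = (d : EReal) := by
        rw [show (1 : EReal) = ((1 : ℝ) : EReal) from rfl, ← EReal.coe_add]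
        norm_num
end
end
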